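/- Let f ∈ X₀(Ω) and let σ be a finite nonnegative Borel measure on Ω×S^{N−1}×[0,∞) admissible for f. Set σ₀ := σ restricted to Ω×S^{N−1}×{0}, σ₊ := σ − σ₀, and let γ₊ := π_♯σ₊ be the push-forward of σ₊ under π(x,v,t) := (x, x+tv). Then there exists a finite ℝ^N-valued Borel vector measure ν such that ∫ ψ·dν = ∫_{Ω×S^{N−1}} ψ(x)·v dσ₀(x,v,0) + ∫ (1/|y−x|) ∫₀¹ ψ(x+t(y−x))·(y−x) dt dγ₊(x,y) for every bounded continuous ψ : ℝ^N → ℝ^N. This ν satisfies −div ν = f and ‖ν‖ ≤ ‖σ‖; moreover, if σ is optimal, i.e. ‖σ‖ = W¹(f), then ‖ν‖ = W¹(f), so ν minimizes the total variation among all vector measures ν' with −div ν' = f. -/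

import Mathlib

open MeasureTheory Filter Topology
open scoped NNReal RealInnerProductSpace

noncomputable section

/-- Euclidean space `ℝ^N`. -/
abbrev Euc (N : ℕ) := EuclideanSpace ℝ (Fin N)

/-- Test functions: `C¹` functions with compact support on `ℝ^N`. -/
def IsTest {N : ℕ} (φ : Euc N → ℝ) : Prop :=
  ContDiff ℝ 1 φ ∧ HasCompactSupport φ

/-- `L^∞(Ω)`-type supremum of a function over the set `Ω`. -/
def supOn {N : ℕ} (Ω : Set (Euc N)) (g : Euc N → ℝ) : ℝ := sSup (g '' Ω)

/-- `f ∈ X₀(Ω)`: distributions of order one with zero average, supported in `Ω`. -/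
def MemX0 {N : ℕ} (Ω : Set (Euc N)) (f : (Euc N → ℝ) →ₗ[ℝ] ℝ) : Prop :=
  (∃ C : ℝ, 0 ≤ C ∧ ∀ φ : Euc N → ℝ, IsTest φ →
      |f φ| ≤ C * (supOn Ω (fun x => |φ x|) + supOn Ω (fun x => ‖gradient φ x‖))) ∧
  ∀ φ : Euc N → ℝ, IsTest φ → (∃ c : ℝ, ∀ x ∈ Ω, φ x = c) → f φ = 0

/-- `f ∈ X₀^♯(Ω)`. -/
def MemX0sharp {N : ℕ} (Ω : Set (Euc N)) (f : (Euc N → ℝ) →ₗ[ℝ] ℝ) : Prop :=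
  MemX0 Ω f ∧ ∀ ε : ℝ, 0 < ε → ∃ C : ℝ, 0 < C ∧ ∀ φ : Euc N → ℝ, IsTest φ →
    |f φ| ≤ C * supOn Ω (fun x => |φ x|) + ε * supOn Ω (fun x => ‖gradient φ x‖)

/-- The Wasserstein norm `W¹(f)`. -/
def W1 {N : ℕ} (f : (Euc N → ℝ) →ₗ[ℝ] ℝ) : ℝ :=
  sSup {r : ℝ | ∃ φ : Euc N → ℝ, IsTest φ ∧ (∀ x, ‖gradient φ x‖ ≤ 1) ∧ r = f φ}

/-- The set `Ω × S^{N-1} × [0,∞)` inside `ℝ^N × ℝ^N × ℝ`. -/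
def SliceSet {N : ℕ} (Ω : Set (Euc N)) : Set (Euc N × Euc N × ℝ) :=
  {p | p.1 ∈ Ω ∧ ‖p.2.1‖ = 1 ∧ 0 ≤ p.2.2}

/-- The function `D_φ(x,v,t)` associated to a test function `φ`. -/
def Dtest {N : ℕ} (φ : Euc N → ℝ) (p : Euc N × Euc N × ℝ) : ℝ :=
  if p.2.2 = 0 then ⟪gradient φ p.1, p.2.1⟫
  else (φ (p.1 + p.2.2 • p.2.1) - φ p.1) / p.2.2

/-- A nonnegative finite measure `σ` on `Ω × S^{N-1} × [0,∞)` is admissible for `f` if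
`∫ D_φ dσ = ⟨f, φ⟩` for every test function `φ`. -/
def IsAdmissible {N : ℕ} (Ω : Set (Euc N)) (f : (Euc N → ℝ) →ₗ[ℝ] ℝ)
    (σ : Measure (Euc N × Euc N × ℝ)) : Prop :=
  IsFiniteMeasure σ ∧ σ (SliceSet Ω)ᶜ = 0 ∧
  ∀ φ : Euc N → ℝ, IsTest φ → ∫ p, Dtest φ p ∂σ = f φ


/-- A finite `ℝ^N`-valued vector measure, given in polar form `ν = v·|ν|` with a finite
positive base measure (the total variation) and a unit-norm density. -/
structure VecMeasure (N : ℕ) where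
  base : Measure (Euc N)
  finite : IsFiniteMeasure base
  density : Euc N → Euc N
  meas : Measurable density
  unit : ∀ᵐ x ∂base, ‖density x‖ = 1

/-- Total variation `‖ν‖` of a vector measure. -/
def VecMeasure.tv {N : ℕ} (ν : VecMeasure N) : ℝ := (ν.base Set.univ).toReal

/-- Pairing `∫ ψ · dν` of a vector measure with a vector field. -/
def VecMeasure.pairing {N : ℕ} (ν : VecMeasure N) (ψ : Euc N → Euc N) : ℝ :=
  ∫ x, ⟪ψ x, ν.density x⟫ ∂ν.base

/-- `−div ν = f`, i.e. `⟨f, φ⟩ = ∫ ∇φ · dν` for all test functions `φ`. -/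
def IsMinusDivOf {N : ℕ} (ν : VecMeasure N) (f : (Euc N → ℝ) →ₗ[ℝ] ℝ) : Prop :=
  ∀ φ : Euc N → ℝ, IsTest φ → f φ = ν.pairing (fun x => gradient φ x)


namespace Aux

variable {N : ℕ}

theorem grad_inner (φ : Euc N → ℝ) (x v : Euc N) :
    ⟪gradient φ x, v⟫ = fderiv ℝ φ x v :=
  InnerProductSpace.toDual_symm_apply

theorem grad_cont {φ : Euc N → ℝ} (hφ : ContDiff ℝ 1 φ) :
    Continuous fun x => gradient φ x := by
  have h1 : Continuous fun x => fderiv ℝ φ x := hφ.continuous_fderiv one_ne_zero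
  exact (InnerProductSpace.toDual ℝ (Euc N)).symm.continuous.comp h1

theorem grad_norm_eq (φ : Euc N → ℝ) (x : Euc N) :
    ‖gradient φ x‖ = ‖fderiv ℝ φ x‖ :=
  (InnerProductSpace.toDual ℝ (Euc N)).symm.norm_map _

theorem grad_bound {φ : Euc N → ℝ} (hφ : IsTest φ) :
    ∃ M : ℝ, 0 ≤ M ∧ (∀ x, ‖gradient φ x‖ ≤ M) ∧ LipschitzWith (Real.toNNReal M) φ := by
  have hc : HasCompactSupport fun x => fderiv ℝ φ x := hφ.2.fderiv ℝ
  have hcont : Continuous fun x => ‖fderiv ℝ φ x‖ := (hφ.1.continuous_fderiv one_ne_zero).norm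
  obtain ⟨C, hC⟩ := hcont.bounded_above_of_compact_support hc.norm
  refine ⟨max C 0, le_max_right _ _, ?_, ?_⟩
  · intro x
    rw [grad_norm_eq]
    exact le_max_of_le_left (by simpa using hC x)
  · apply lipschitzWith_of_nnnorm_fderiv_le (hφ.1.differentiable one_ne_zero)
    intro x
    rw [← NNReal.coe_le_coe]
    simp only [coe_nnnorm]
    rw [Real.coe_toNNReal _ (le_max_right C 0)]
    exact le_max_of_le_left (by simpa using hC x)

theorem ftc_line {φ : Euc N → ℝ} (hφ : ContDiff ℝ 1 φ) (x y : Euc N) :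
    ∫ t in (0:ℝ)..1, ⟪gradient φ (x + t • (y - x)), y - x⟫ = φ y - φ x := by
  have hline : ∀ t : ℝ, HasDerivAt (fun s : ℝ => x + s • (y - x)) (y - x) t := by
    intro t
    simpa using ((hasDerivAt_id t).smul_const (y - x)).const_add x
  have hg : ∀ t : ℝ, HasDerivAt (fun s : ℝ => φ (x + s • (y - x)))
      (⟪gradient φ (x + t • (y - x)), y - x⟫) t := by
    intro t
    rw [grad_inner]
    exact (((hφ.differentiable one_ne_zero) _).hasFDerivAt).comp_hasDerivAt t (hline t)
  have hcont : Continuous fun t : ℝ => ⟪gradient φ (x + t • (y - x)), y - x⟫ := by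
    exact ((grad_cont hφ).comp (by continuity)).inner continuous_const
  have := intervalIntegral.integral_eq_sub_of_hasDerivAt
    (f := fun s : ℝ => φ (x + s • (y - x)))
    (f' := fun t : ℝ => ⟪gradient φ (x + t • (y - x)), y - x⟫)
    (fun t _ => hg t) (hcont.intervalIntegrable 0 1)
  simpa using this

end Aux


set_option maxHeartbeats 2000000 in
/-- From any admissible `σ` one constructs a vector measure
`ν = ν₀ + ν₊` (here described through its action on bounded continuous vector fields),
with `−div ν = f`, `‖ν‖ ≤ ‖σ‖`, and if `σ` is optimal (`‖σ‖ = W¹(f)`) then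
`‖ν‖ = W¹(f)` and `ν` minimizes the total variation among vector measures `ν'` with
`−div ν' = f`. -/
theorem statement1 {N : ℕ} (Ω : Set (Euc N)) (hΩconv : Convex ℝ Ω) (hΩcomp : IsCompact Ω)
    (f : (Euc N → ℝ) →ₗ[ℝ] ℝ) (hf : MemX0 Ω f)
    (σ : Measure (Euc N × Euc N × ℝ)) (hσ : IsAdmissible Ω f σ) :
    ∃ ν : VecMeasure N,
      (∀ ψ : Euc N → Euc N, Continuous ψ → (∃ M : ℝ, ∀ x, ‖ψ x‖ ≤ M) →
        ν.pairing ψ =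
          (∫ p, ⟪ψ p.1, p.2.1⟫ ∂(σ.restrict {p : Euc N × Euc N × ℝ | p.2.2 = 0})) +
          ∫ q : Euc N × Euc N, ((1 / ‖q.2 - q.1‖) *
              ∫ t in (0:ℝ)..1, ⟪ψ (q.1 + t • (q.2 - q.1)), q.2 - q.1⟫)
            ∂((σ.restrict {p : Euc N × Euc N × ℝ | p.2.2 ≠ 0}).map
                (fun p : Euc N × Euc N × ℝ => (p.1, p.1 + p.2.2 • p.2.1)))) ∧
      IsMinusDivOf ν f ∧
      ν.tv ≤ (σ Set.univ).toReal ∧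
      ((σ Set.univ).toReal = W1 f →
        ν.tv = W1 f ∧ ∀ ν' : VecMeasure N, IsMinusDivOf ν' f → ν.tv ≤ ν'.tv) := by
  classical
  obtain ⟨hfin, hnull, hadm⟩ := hσ
  haveI := hfin
  -- basic measurability
  have hm_x : Measurable fun p : Euc N × Euc N × ℝ => p.1 := measurable_fst
  have hm_v : Measurable fun p : Euc N × Euc N × ℝ => p.2.1 := measurable_snd.fst
  have hm_t : Measurable fun p : Euc N × Euc N × ℝ => p.2.2 := measurable_snd.snd
  have hSm : MeasurableSet (SliceSet Ω) := by
    have h1 : MeasurableSet {p : Euc N × Euc N × ℝ | p.1 ∈ Ω} :=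
      hm_x (hΩcomp.isClosed.measurableSet)
    have h2 : MeasurableSet {p : Euc N × Euc N × ℝ | ‖p.2.1‖ = 1} :=
      hm_v.norm (measurableSet_singleton 1)
    have h3 : MeasurableSet {p : Euc N × Euc N × ℝ | 0 ≤ p.2.2} :=
      hm_t measurableSet_Ici
    exact h1.inter (h2.inter h3)
  have hS : ∀ᵐ p ∂σ, p ∈ SliceSet Ω := by
    rw [ae_iff]; exact hnull
  set Z : Set (Euc N × Euc N × ℝ) := {p : Euc N × Euc N × ℝ | p.2.2 = 0} with hZdef
  have hZm : MeasurableSet Z := hm_t (measurableSet_singleton 0)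
  set σ0 : Measure (Euc N × Euc N × ℝ) := σ.restrict Z with hσ0
  set σp : Measure (Euc N × Euc N × ℝ) := σ.restrict {p : Euc N × Euc N × ℝ | p.2.2 ≠ 0}
    with hσp
  have hZc : {p : Euc N × Euc N × ℝ | p.2.2 ≠ 0} = Zᶜ := rfl
  set π : Euc N × Euc N × ℝ → Euc N × Euc N :=
    fun p : Euc N × Euc N × ℝ => (p.1, p.1 + p.2.2 • p.2.1) with hπdef
  have hπ : Measurable π := hm_x.prodMk (hm_x.add (hm_t.smul hm_v))
  set γ : Measure (Euc N × Euc N) := σp.map π with hγdef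
  haveI : IsFiniteMeasure γ := by
    constructor
    rw [hγdef, Measure.map_apply hπ MeasurableSet.univ]
    exact measure_lt_top _ _
  set P : Measure ℝ := volume.restrict (Set.Ioc (0:ℝ) 1) with hPdef
  haveI : IsProbabilityMeasure P := by constructor; simp [hPdef]
  set T : (Euc N × Euc N) × ℝ → Euc N × Euc N :=
    fun z => (z.1.1 + z.2 • (z.1.2 - z.1.1), ‖z.1.2 - z.1.1‖⁻¹ • (z.1.2 - z.1.1)) with hTdef
  have hd : Measurable fun z : (Euc N × Euc N) × ℝ => z.1.2 - z.1.1 :=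
    measurable_fst.snd.sub measurable_fst.fst
  have hT : Measurable T :=
    (measurable_fst.fst.add (measurable_snd.smul hd)).prodMk (hd.norm.inv.smul hd)
  set μ2 : Measure ((Euc N × Euc N) × ℝ) := γ.prod P with hμ2def
  have hm0 : Measurable fun p : Euc N × Euc N × ℝ => (p.1, p.2.1) := hm_x.prodMk hm_v
  set ρ0 : Measure (Euc N × Euc N) := σ0.map (fun p => (p.1, p.2.1)) with hρ0def
  set ρ1 : Measure (Euc N × Euc N) := μ2.map T with hρ1def
  haveI : IsFiniteMeasure ρ0 := by
    constructor
    rw [hρ0def, Measure.map_apply hm0 MeasurableSet.univ]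
    exact measure_lt_top _ _
  haveI : IsFiniteMeasure ρ1 := by
    constructor
    rw [hρ1def, Measure.map_apply hT MeasurableSet.univ]
    exact measure_lt_top _ _
  set ρ : Measure (Euc N × Euc N) := ρ0 + ρ1 with hρdef
  haveI : IsFiniteMeasure ρ := by rw [hρdef]; infer_instance
  -- unit norm a.e.
  have hunit : ∀ᵐ q ∂ρ, ‖q.2‖ = 1 := by
    rw [ae_iff]
    have hBadm : MeasurableSet {q : Euc N × Euc N | ¬ ‖q.2‖ = 1} :=
      (measurable_snd.norm (measurableSet_singleton 1)).compl
    rw [hρdef, Measure.add_apply]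
    have h0 : ρ0 {q : Euc N × Euc N | ¬ ‖q.2‖ = 1} = 0 := by
      rw [hρ0def, Measure.map_apply hm0 hBadm]
      have hsub0 : (fun p : Euc N × Euc N × ℝ => (p.1, p.2.1)) ⁻¹'
          {q : Euc N × Euc N | ¬ ‖q.2‖ = 1} ⊆ (SliceSet Ω)ᶜ :=
        fun p hp hpS => hp hpS.2.1
      exact le_antisymm (le_trans (Measure.restrict_apply_le _ _)
        (le_of_eq (measure_mono_null hsub0 hnull))) zero_le
    have h1 : ρ1 {q : Euc N × Euc N | ¬ ‖q.2‖ = 1} = 0 := by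
      rw [hρ1def, Measure.map_apply hT hBadm]
      have hsub : T ⁻¹' {q : Euc N × Euc N | ¬ ‖q.2‖ = 1} ⊆
          (fun z : (Euc N × Euc N) × ℝ => z.1.2 - z.1.1) ⁻¹' {0} := by
        intro z hz
        by_contra hne
        apply hz
        have hne' : z.1.2 - z.1.1 ≠ 0 := hne
        show ‖‖z.1.2 - z.1.1‖⁻¹ • (z.1.2 - z.1.1)‖ = 1
        rw [norm_smul, norm_inv, norm_norm, inv_mul_cancel₀ (norm_ne_zero_iff.mpr hne')]
      refine measure_mono_null hsub ?_
      have hpre : (fun z : (Euc N × Euc N) × ℝ => z.1.2 - z.1.1) ⁻¹' {0}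
          = {q : Euc N × Euc N | q.2 - q.1 = 0} ×ˢ (Set.univ : Set ℝ) := by
        ext z; simp [Set.mem_prod]
      rw [hpre, hμ2def, Measure.prod_prod, measure_univ, mul_one]
      have hAm : MeasurableSet {q : Euc N × Euc N | q.2 - q.1 = 0} :=
        (measurable_snd.sub measurable_fst) (measurableSet_singleton 0)
      rw [hγdef, Measure.map_apply hπ hAm]
      rw [hσp, hZc, Measure.restrict_apply' hZm.compl]
      refine measure_mono_null ?_ hnull
      rintro p ⟨hp0, hpt⟩ hpS
      have hsv : p.2.2 • p.2.1 = 0 := by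
        have : (p.1 + p.2.2 • p.2.1) - p.1 = 0 := hp0
        simpa using this
      have hv0 : p.2.1 = 0 := by
        rcases smul_eq_zero.mp hsv with h | h
        · exact absurd h hpt
        · exact h
      have := hpS.2.1
      rw [hv0, norm_zero] at this
      exact one_ne_zero this.symm
    rw [h0, h1, add_zero]
  -- disintegration
  have hdis : ρ.fst.compProd ρ.condKernel = ρ := ρ.disintegrate ρ.condKernel
  set w : Euc N → Euc N := fun x => ∫ u, u ∂(ρ.condKernel x) with hwdef
  have hwsm : StronglyMeasurable w := by
    have : StronglyMeasurable fun q : Euc N × Euc N => q.2 :=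
      measurable_snd.stronglyMeasurable
    exact this.integral_kernel_prod_right'
  have hwm : Measurable w := hwsm.measurable
  have haeae : ∀ᵐ x ∂ρ.fst, ∀ᵐ u ∂ρ.condKernel x, ‖u‖ = 1 :=
    Measure.ae_ae_of_ae_compProd (hdis ▸ hunit)
  have hxint : ∀ᵐ x ∂ρ.fst,
      Integrable (fun u : Euc N => u) (ρ.condKernel x) ∧ ‖w x‖ ≤ 1 := by
    filter_upwards [haeae] with x hx
    haveI : IsProbabilityMeasure (ρ.condKernel x) := inferInstance
    have hint : Integrable (fun u : Euc N => u) (ρ.condKernel x) := by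
      refine Integrable.mono' (integrable_const 1) aestronglyMeasurable_id ?_
      filter_upwards [hx] with u hu
      simp [hu]
    refine ⟨hint, ?_⟩
    calc ‖w x‖ ≤ ∫ u, ‖u‖ ∂(ρ.condKernel x) := norm_integral_le_integral_norm _
      _ ≤ ∫ _u, (1:ℝ) ∂(ρ.condKernel x) := by
          refine integral_mono_ae hint.norm (integrable_const 1) ?_
          filter_upwards [hx] with u hu
          simp [hu]
      _ = 1 := by simp
  -- the main scalar identity
  have hinner : ∀ ψ : Euc N → Euc N, Continuous ψ → (∃ M : ℝ, ∀ x, ‖ψ x‖ ≤ M) →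
      ∫ q, ⟪ψ q.1, q.2⟫ ∂ρ = ∫ x, ⟪ψ x, w x⟫ ∂ρ.fst := by
    intro ψ hψc ⟨M, hM⟩
    have hcontf : Continuous fun q : Euc N × Euc N => ⟪ψ q.1, q.2⟫ :=
      (hψc.comp continuous_fst).inner continuous_snd
    have hIρ : Integrable (fun q : Euc N × Euc N => ⟪ψ q.1, q.2⟫) ρ := by
      refine Integrable.mono' (integrable_const M) hcontf.aestronglyMeasurable ?_
      filter_upwards [hunit] with q hq
      rw [Real.norm_eq_abs]
      calc |⟪ψ q.1, q.2⟫| ≤ ‖ψ q.1‖ * ‖q.2‖ := abs_real_inner_le_norm _ _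
        _ = ‖ψ q.1‖ := by rw [hq, mul_one]
        _ ≤ M := hM _
    conv_lhs => rw [← hdis]
    rw [Measure.integral_compProd (by rw [hdis]; exact hIρ)]
    refine integral_congr_ae ?_
    filter_upwards [hxint] with x hx
    exact integral_inner hx.1 (ψ x)
  -- the vector measure
  have hwnnm : Measurable fun x => (‖w x‖₊ : ℝ≥0) := hwm.nnnorm
  set ν : VecMeasure N :=
    { base := ρ.fst.withDensity (fun x => ((‖w x‖₊ : ℝ≥0) : ENNReal))
      finite := by
        constructor
        rw [withDensity_apply _ MeasurableSet.univ]
        calc ∫⁻ x in Set.univ, ((‖w x‖₊ : ℝ≥0) : ENNReal) ∂ρ.fst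
            ≤ ∫⁻ _x in Set.univ, (1:ENNReal) ∂ρ.fst := by
              rw [Measure.restrict_univ]
              refine lintegral_mono_ae ?_
              filter_upwards [hxint] with x hx
              simpa [ENNReal.coe_le_one_iff, ← NNReal.coe_le_coe] using hx.2
          _ < ⊤ := by
              rw [Measure.restrict_univ]
              simpa using measure_lt_top ρ.fst Set.univ
      density := fun x => ‖w x‖⁻¹ • w x
      meas := (hwm.norm.inv).smul hwm
      unit := by
        have hwz : MeasurableSet {x : Euc N | w x = 0} :=
          hwm (measurableSet_singleton 0)
        have hz : (ρ.fst.withDensity (fun x => ((‖w x‖₊ : ℝ≥0) : ENNReal))) {x | w x = 0} = 0 := by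
          rw [withDensity_apply _ hwz]
          rw [setLIntegral_congr_fun (g := fun _ => (0:ENNReal)) hwz
            (fun x (hx : w x = 0) => by simp [hx])]
          simp
        rw [ae_iff]
        refine measure_mono_null ?_ hz
        intro x hx
        by_contra hx0
        apply hx
        have hx0' : w x ≠ 0 := hx0
        show ‖‖w x‖⁻¹ • w x‖ = 1
        rw [norm_smul, norm_inv, norm_norm, inv_mul_cancel₀ (norm_ne_zero_iff.mpr hx0')] }
    with hνdef
  have hpair : ∀ ψ : Euc N → Euc N, ν.pairing ψ = ∫ x, ⟪ψ x, w x⟫ ∂ρ.fst := by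
    intro ψ
    show ∫ x, ⟪ψ x, ‖w x‖⁻¹ • w x⟫ ∂(ρ.fst.withDensity (fun x => ((‖w x‖₊ : ℝ≥0) : ENNReal)))
        = ∫ x, ⟪ψ x, w x⟫ ∂ρ.fst
    rw [integral_withDensity_eq_integral_smul hwnnm]
    refine integral_congr_ae (ae_of_all _ fun x => ?_)
    rcases eq_or_ne (w x) 0 with hx | hx
    · simp [hx]
    · have hne : ‖w x‖ ≠ 0 := norm_ne_zero_iff.mpr hx
      simp only [NNReal.smul_def, coe_nnnorm, real_inner_smul_right, smul_eq_mul]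
      rw [mul_inv_cancel_left₀ hne]
  have hrep : ∀ ψ : Euc N → Euc N, Continuous ψ → (∃ M : ℝ, ∀ x, ‖ψ x‖ ≤ M) →
      ∫ q, ⟪ψ q.1, q.2⟫ ∂ρ =
        (∫ p, ⟪ψ p.1, p.2.1⟫ ∂σ0) +
        ∫ q : Euc N × Euc N, ((1 / ‖q.2 - q.1‖) *
            ∫ t in (0:ℝ)..1, ⟪ψ (q.1 + t • (q.2 - q.1)), q.2 - q.1⟫) ∂γ := by
    intro ψ hψc ⟨M, hM⟩
    have hM0 : 0 ≤ M := le_trans (norm_nonneg _) (hM 0)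
    have hcontf : Continuous fun q : Euc N × Euc N => ⟪ψ q.1, q.2⟫ :=
      (hψc.comp continuous_fst).inner continuous_snd
    have hIρ : Integrable (fun q : Euc N × Euc N => ⟪ψ q.1, q.2⟫) ρ := by
      refine Integrable.mono' (integrable_const M) hcontf.aestronglyMeasurable ?_
      filter_upwards [hunit] with q hq
      rw [Real.norm_eq_abs]
      calc |⟪ψ q.1, q.2⟫| ≤ ‖ψ q.1‖ * ‖q.2‖ := abs_real_inner_le_norm _ _
        _ = ‖ψ q.1‖ := by rw [hq, mul_one]
        _ ≤ M := hM _
    have h0 : ∫ q, ⟪ψ q.1, q.2⟫ ∂ρ0 = ∫ p, ⟪ψ p.1, p.2.1⟫ ∂σ0 := by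
      rw [hρ0def, integral_map hm0.aemeasurable hcontf.aestronglyMeasurable]
    have hIμ2 : Integrable (fun z => ⟪ψ (T z).1, (T z).2⟫) μ2 := by
      refine Integrable.mono'
        (integrable_const M) ((hcontf.measurable.comp hT)).aestronglyMeasurable ?_
      refine ae_of_all _ fun z => ?_
      rw [Real.norm_eq_abs]
      calc |⟪ψ (T z).1, (T z).2⟫| ≤ ‖ψ (T z).1‖ * ‖(T z).2‖ := abs_real_inner_le_norm _ _
        _ ≤ M * 1 := by
            refine mul_le_mul (hM _) ?_ (norm_nonneg _) hM0
            show ‖‖z.1.2 - z.1.1‖⁻¹ • (z.1.2 - z.1.1)‖ ≤ 1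
            rcases eq_or_ne (z.1.2 - z.1.1) 0 with h | h
            · simp [h]
            · rw [norm_smul, norm_inv, norm_norm,
                inv_mul_cancel₀ (norm_ne_zero_iff.mpr h)]
        _ = M := mul_one M
    have h1 : ∫ q, ⟪ψ q.1, q.2⟫ ∂ρ1 = ∫ q : Euc N × Euc N, ((1 / ‖q.2 - q.1‖) *
        ∫ t in (0:ℝ)..1, ⟪ψ (q.1 + t • (q.2 - q.1)), q.2 - q.1⟫) ∂γ := by
      rw [hρ1def, integral_map hT.aemeasurable hcontf.aestronglyMeasurable, hμ2def,
        integral_prod _ (by rw [← hμ2def]; exact hIμ2)]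
      refine integral_congr_ae (ae_of_all _ fun q => ?_)
      have hq : ∀ t : ℝ, ⟪ψ (T (q, t)).1, (T (q, t)).2⟫
          = ‖q.2 - q.1‖⁻¹ * ⟪ψ (q.1 + t • (q.2 - q.1)), q.2 - q.1⟫ := by
        intro t
        show ⟪ψ (q.1 + t • (q.2 - q.1)), ‖q.2 - q.1‖⁻¹ • (q.2 - q.1)⟫ = _
        rw [real_inner_smul_right]
      calc ∫ t, ⟪ψ (T (q, t)).1, (T (q, t)).2⟫ ∂P
          = ∫ t, ‖q.2 - q.1‖⁻¹ * ⟪ψ (q.1 + t • (q.2 - q.1)), q.2 - q.1⟫ ∂P := by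
            simp_rw [hq]
        _ = ‖q.2 - q.1‖⁻¹ * ∫ t, ⟪ψ (q.1 + t • (q.2 - q.1)), q.2 - q.1⟫ ∂P :=
            integral_const_mul _ _
        _ = (1 / ‖q.2 - q.1‖) *
            ∫ t in (0:ℝ)..1, ⟪ψ (q.1 + t • (q.2 - q.1)), q.2 - q.1⟫ := by
            rw [one_div, hPdef, ← intervalIntegral.integral_of_le zero_le_one]
    rw [hρdef,
      integral_add_measure (integrable_add_measure.mp (by rw [← hρdef]; exact hIρ)).1
        (integrable_add_measure.mp (by rw [← hρdef]; exact hIρ)).2, h0, h1]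
  have hbullet : ∀ ψ : Euc N → Euc N, Continuous ψ → (∃ M : ℝ, ∀ x, ‖ψ x‖ ≤ M) →
      ν.pairing ψ =
        (∫ p, ⟪ψ p.1, p.2.1⟫ ∂σ0) +
        ∫ q : Euc N × Euc N, ((1 / ‖q.2 - q.1‖) *
            ∫ t in (0:ℝ)..1, ⟪ψ (q.1 + t • (q.2 - q.1)), q.2 - q.1⟫) ∂γ := by
    intro ψ h1 h2
    rw [hpair ψ, ← hinner ψ h1 h2, hrep ψ h1 h2]
  -- divergence identity
  have hdiv : IsMinusDivOf ν f := by
    intro φ hφ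
    obtain ⟨M, hM0, hMg, hlip⟩ := Aux.grad_bound hφ
    have hψc : Continuous fun x => gradient φ x := Aux.grad_cont hφ.1
    have hψb : ∃ M : ℝ, ∀ x, ‖gradient φ x‖ ≤ M := ⟨M, hMg⟩
    rw [← hadm φ hφ, hbullet _ hψc hψb]
    -- integrability of `Dtest φ`
    have hg1c : Continuous fun p : Euc N × Euc N × ℝ => ⟪gradient φ p.1, p.2.1⟫ :=
      (hψc.comp continuous_fst).inner continuous_snd.fst
    have hg2m : Measurable fun p : Euc N × Euc N × ℝ =>
        (φ (p.1 + p.2.2 • p.2.1) - φ p.1) / p.2.2 := by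
      have hc1 : Continuous fun p : Euc N × Euc N × ℝ => φ (p.1 + p.2.2 • p.2.1) :=
        hφ.1.continuous.comp
          (continuous_fst.add ((continuous_snd.snd).smul continuous_snd.fst))
      have hc2 : Continuous fun p : Euc N × Euc N × ℝ => φ p.1 :=
        hφ.1.continuous.comp continuous_fst
      exact (hc1.sub hc2).measurable.div hm_t
    have hDm : Measurable (Dtest φ) := Measurable.ite hZm hg1c.measurable hg2m
    have hDb : ∀ᵐ p ∂σ, ‖Dtest φ p‖ ≤ M := by
      filter_upwards [hS] with p hp
      have hv : ‖p.2.1‖ = 1 := hp.2.1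
      rw [Real.norm_eq_abs]
      rcases eq_or_ne p.2.2 0 with ht | ht
      · rw [Dtest, if_pos ht]
        calc |⟪gradient φ p.1, p.2.1⟫| ≤ ‖gradient φ p.1‖ * ‖p.2.1‖ :=
              abs_real_inner_le_norm _ _
          _ = ‖gradient φ p.1‖ := by rw [hv, mul_one]
          _ ≤ M := hMg _
      · rw [Dtest, if_neg ht]
        have hnum : |φ (p.1 + p.2.2 • p.2.1) - φ p.1| ≤ M * |p.2.2| := by
          have := hlip.dist_le_mul (p.1 + p.2.2 • p.2.1) p.1
          rw [Real.dist_eq, dist_eq_norm, add_sub_cancel_left, norm_smul, hv, mul_one,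
            Real.norm_eq_abs, Real.coe_toNNReal _ hM0] at this
          exact this
        rw [abs_div]
        rw [div_le_iff₀ (abs_pos.mpr ht)]
        exact hnum
      
    have hID : Integrable (Dtest φ) σ :=
      Integrable.mono' (integrable_const M) hDm.aestronglyMeasurable hDb
    have hsplitσ : σ0 + σp = σ := by
      rw [hσ0, hσp, hZc]
      exact Measure.restrict_add_restrict_compl hZm
    have hID2 : Integrable (Dtest φ) (σ0 + σp) := by rw [hsplitσ]; exact hID
    have hIS : ∫ p, Dtest φ p ∂σ = (∫ p, Dtest φ p ∂σ0) + ∫ p, Dtest φ p ∂σp := by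
      conv_lhs => rw [← hsplitσ]
      exact integral_add_measure (integrable_add_measure.mp hID2).1
        (integrable_add_measure.mp hID2).2
    have hA : ∫ p, Dtest φ p ∂σ0 = ∫ p, ⟪gradient φ p.1, p.2.1⟫ ∂σ0 := by
      refine integral_congr_ae ?_
      have hz : ∀ᵐ p ∂σ0, p ∈ Z := by rw [hσ0]; exact ae_restrict_mem hZm
      filter_upwards [hz] with p hp
      have hp0 : p.2.2 = 0 := hp
      rw [Dtest, if_pos hp0]
    have hFm : Measurable fun q : Euc N × Euc N => (1 / ‖q.2 - q.1‖) * (φ q.2 - φ q.1) := by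
      have h1 : Measurable fun q : Euc N × Euc N => (1:ℝ) / ‖q.2 - q.1‖ :=
        measurable_const.div (measurable_snd.sub measurable_fst).norm
      have h2 : Measurable fun q : Euc N × Euc N => φ q.2 - φ q.1 :=
        (hφ.1.continuous.measurable.comp measurable_snd).sub
          (hφ.1.continuous.measurable.comp measurable_fst)
      exact h1.mul h2
    have hB : ∫ p, Dtest φ p ∂σp = ∫ q : Euc N × Euc N, ((1 / ‖q.2 - q.1‖) *
        ∫ t in (0:ℝ)..1, ⟪gradient φ (q.1 + t • (q.2 - q.1)), q.2 - q.1⟫) ∂γ := by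
      calc ∫ p, Dtest φ p ∂σp
          = ∫ p, (1 / ‖(π p).2 - (π p).1‖) * (φ (π p).2 - φ (π p).1) ∂σp := by
            refine integral_congr_ae ?_
            have h1 : ∀ᵐ p ∂σp, p ∈ {p : Euc N × Euc N × ℝ | p.2.2 ≠ 0} := by
              rw [hσp]
              exact ae_restrict_mem (by rw [hZc]; exact hZm.compl)
            have h2 : ∀ᵐ p ∂σp, p ∈ SliceSet Ω := by
              rw [hσp]; exact ae_restrict_of_ae hS
            filter_upwards [h1, h2] with p hpt hpS
            have ht : p.2.2 ≠ 0 := hpt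
            have hv : ‖p.2.1‖ = 1 := hpS.2.1
            have htnn : 0 ≤ p.2.2 := hpS.2.2
            show Dtest φ p =
              (1 / ‖(p.1 + p.2.2 • p.2.1) - p.1‖) * (φ (p.1 + p.2.2 • p.2.1) - φ p.1)
            rw [Dtest, if_neg ht, add_sub_cancel_left, norm_smul, hv, mul_one,
              Real.norm_eq_abs, abs_of_nonneg htnn, one_div, ← div_eq_inv_mul]
        _ = ∫ q : Euc N × Euc N, (1 / ‖q.2 - q.1‖) * (φ q.2 - φ q.1) ∂γ := by
            rw [hγdef, integral_map hπ.aemeasurable hFm.aestronglyMeasurable]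
        _ = ∫ q : Euc N × Euc N, ((1 / ‖q.2 - q.1‖) *
            ∫ t in (0:ℝ)..1, ⟪gradient φ (q.1 + t • (q.2 - q.1)), q.2 - q.1⟫) ∂γ := by
            refine integral_congr_ae (ae_of_all _ fun q => ?_)
            show (1 / ‖q.2 - q.1‖) * (φ q.2 - φ q.1) = (1 / ‖q.2 - q.1‖) *
              ∫ t in (0:ℝ)..1, ⟪gradient φ (q.1 + t • (q.2 - q.1)), q.2 - q.1⟫
            rw [Aux.ftc_line hφ.1 q.1 q.2]
    rw [hIS, hA, hB]
  -- total variation bound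
  have hfstne : ρ.fst Set.univ ≠ ⊤ := (measure_lt_top _ _).ne
  have htvb : ν.base Set.univ ≤ ρ.fst Set.univ := by
    show (ρ.fst.withDensity fun x => ((‖w x‖₊ : ℝ≥0) : ENNReal)) Set.univ ≤ ρ.fst Set.univ
    rw [withDensity_apply _ MeasurableSet.univ, Measure.restrict_univ]
    calc ∫⁻ x, ((‖w x‖₊ : ℝ≥0) : ENNReal) ∂ρ.fst
        ≤ ∫⁻ _x, (1 : ENNReal) ∂ρ.fst := by
          refine lintegral_mono_ae ?_
          filter_upwards [hxint] with x hx
          simpa [ENNReal.coe_le_one_iff, ← NNReal.coe_le_coe] using hx.2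
      _ = ρ.fst Set.univ := by simp
  have hmass : ρ Set.univ = σ Set.univ := by
    have h0 : ρ0 Set.univ = σ Z := by
      rw [hρ0def, Measure.map_apply hm0 MeasurableSet.univ, Set.preimage_univ, hσ0,
        Measure.restrict_apply_univ]
    have h1 : ρ1 Set.univ = σ Zᶜ := by
      rw [hρ1def, Measure.map_apply hT MeasurableSet.univ, Set.preimage_univ, hμ2def]
      have : (Set.univ : Set ((Euc N × Euc N) × ℝ))
          = (Set.univ : Set (Euc N × Euc N)) ×ˢ (Set.univ : Set ℝ) := by
        ext z; simp
      rw [this, Measure.prod_prod, measure_univ (μ := P), mul_one, hγdef,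
        Measure.map_apply hπ MeasurableSet.univ, Set.preimage_univ, hσp, hZc,
        Measure.restrict_apply_univ]
    rw [hρdef, Measure.add_apply, h0, h1, measure_add_measure_compl hZm]
  have htv : ν.tv ≤ (σ Set.univ).toReal := by
    have : ν.tv ≤ (ρ.fst Set.univ).toReal := ENNReal.toReal_mono hfstne htvb
    rwa [Measure.fst_univ, hmass] at this
  -- lower bound for total variation of any divergence representative
  have hW1le : ∀ ν' : VecMeasure N, IsMinusDivOf ν' f → W1 f ≤ ν'.tv := by
    intro ν' hν'
    haveI := ν'.finite
    refine csSup_le ?_ ?_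
    · refine ⟨0, (0 : Euc N → ℝ), ⟨contDiff_const, ?_⟩, ?_, (map_zero f).symm⟩
      · simp [HasCompactSupport, tsupport, Function.support]
      · intro x
        have h0 : gradient (0 : Euc N → ℝ) x = 0 := by
          have : (0 : Euc N → ℝ) = fun _ => (0:ℝ) := rfl
          rw [this]; simp [gradient]
        rw [h0, norm_zero]
        exact zero_le_one
    · rintro r ⟨φ, hφ, hg1, rfl⟩
      rw [hν' φ hφ]
      have hb : ∀ᵐ x ∂ν'.base, ⟪gradient φ x, ν'.density x⟫ ≤ 1 ∧
          |⟪gradient φ x, ν'.density x⟫| ≤ 1 := by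
        filter_upwards [ν'.unit] with x hx
        have habs : |⟪gradient φ x, ν'.density x⟫| ≤ 1 := by
          calc |⟪gradient φ x, ν'.density x⟫| ≤ ‖gradient φ x‖ * ‖ν'.density x‖ :=
                abs_real_inner_le_norm _ _
            _ = ‖gradient φ x‖ := by rw [hx, mul_one]
            _ ≤ 1 := hg1 x
        exact ⟨le_trans (le_abs_self _) habs, habs⟩
      have hint : Integrable (fun x => ⟪gradient φ x, ν'.density x⟫) ν'.base := by
        refine Integrable.mono' (integrable_const 1)
          ((Aux.grad_cont hφ.1).measurable.inner ν'.meas).aestronglyMeasurable ?_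
        filter_upwards [hb] with x hx
        rw [Real.norm_eq_abs]; exact hx.2
      calc ν'.pairing (fun x => gradient φ x) ≤ ∫ _x, (1:ℝ) ∂ν'.base := by
            refine integral_mono_ae hint (integrable_const 1) ?_
            filter_upwards [hb] with x hx
            exact hx.1
        _ = ν'.tv := by
            rw [integral_const, smul_eq_mul, mul_one]
            rfl
  refine ⟨ν, fun ψ h1 h2 => hbullet ψ h1 h2, hdiv, htv, fun hopt => ?_⟩
  have h1 : ν.tv = W1 f := le_antisymm (hopt ▸ htv) (hW1le ν hdiv)
  exact ⟨h1, fun ν' hν' => h1 ▸ hW1le ν' hν'⟩
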